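/- For γ > 1, the pointwise minimizer of the expected binary smooth hinge loss is α* = 1 - γ(1-p)/p if p ≥ γ/2; α* = 2p - 1 if 1 - γ/2 ≤ p ≤ γ/2; and α* = -1 + γ p/(1-p) if p < 1 - γ/2, and α* is a strictly monotonically increasing function of p on (0,1). -/

import Mathlib

/-- The smooth hinge loss with smoothing parameter `γ`. -/
noncomputable def smoothHinge (γ α : ℝ) : ℝ :=
  if α < 1 - γ then 1 - α - γ / 2
  else if α ≤ 1 then (α - 1) ^ 2 / (2 * γ)
  else 0

/-- Expected binary smooth hinge loss at conditional probability `p`. -/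
noncomputable def smoothRisk (γ p α : ℝ) : ℝ :=
  p * smoothHinge γ α + (1 - p) * smoothHinge γ (-α)

/-- Bayes optimal score of the smooth hinge loss for `γ > 1`. -/
noncomputable def bayesScore2 (γ p : ℝ) : ℝ :=
  if γ / 2 ≤ p then 1 - γ * (1 - p) / p
  else if 1 - γ / 2 ≤ p then 2 * p - 1
  else -1 + γ * p / (1 - p)

lemma hinge_quad {γ β : ℝ} (hβ1 : 1 - γ ≤ β) (hβ2 : β ≤ 1) :
    smoothHinge γ β = (β - 1) ^ 2 / (2 * γ) := by
  unfold smoothHinge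
  rw [if_neg (not_lt.2 hβ1), if_pos hβ2]

lemma hinge_lin_eq {γ α : ℝ} (hγ : 0 < γ) (h : α ≤ 1 - γ) :
    smoothHinge γ α = 1 - α - γ / 2 := by
  unfold smoothHinge
  rcases lt_or_eq_of_le h with h' | h'
  · rw [if_pos h']
  · rw [if_neg (by rw [h']; exact lt_irrefl _), if_pos (by linarith)]
    rw [h']
    field_simp
    ring

lemma hinge_lin_le {γ : ℝ} (hγ : 0 < γ) (α : ℝ) : 1 - α - γ / 2 ≤ smoothHinge γ α := by
  unfold smoothHinge
  split_ifs with h1 h2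
  · exact le_rfl
  · rw [le_div_iff₀ (by positivity : (0:ℝ) < 2 * γ)]
    nlinarith [sq_nonneg (1 - α - γ)]
  · push_neg at h1 h2
    linarith

lemma hinge_tangent {γ β : ℝ} (hγ : 0 < γ) (hβ1 : 1 - γ ≤ β) (hβ2 : β ≤ 1) (α : ℝ) :
    (β - 1) ^ 2 / (2 * γ) + (β - 1) / γ * (α - β) ≤ smoothHinge γ α := by
  have h2γ : (0:ℝ) < 2 * γ := by positivity
  have e : (β - 1) ^ 2 / (2 * γ) + (β - 1) / γ * (α - β)
      = ((β - 1) ^ 2 + 2 * (β - 1) * (α - β)) / (2 * γ) := by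
    field_simp
  rw [e]
  unfold smoothHinge
  split_ifs with h1 h2
  · rw [div_le_iff₀ h2γ]
    nlinarith [sq_nonneg (γ - 1 + β), mul_nonneg (by linarith : (0:ℝ) ≤ 1 - γ - α) (by linarith : (0:ℝ) ≤ γ - 1 + β)]
  · rw [div_le_div_iff₀ h2γ h2γ]
    nlinarith [mul_nonneg (sq_nonneg (α - β)) h2γ.le]
  · push_neg at h1 h2
    rw [div_le_iff₀ h2γ]
    nlinarith [mul_nonneg (by linarith : (0:ℝ) ≤ 1 - β) (by linarith : (0:ℝ) ≤ α - 1)]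

/-- For `γ > 1`, the pointwise minimizer of the expected binary smooth hinge
loss is given piecewise by `1 - γ(1-p)/p` for `p ≥ γ/2`, `2p - 1` for
`1 - γ/2 ≤ p ≤ γ/2`, and `-1 + γ p/(1-p)` for `p < 1 - γ/2`, and it is a
strictly monotonically increasing function of `p` on `(0,1)`. -/
theorem stmt10 (γ : ℝ) (hγ : 1 < γ) :
    (∀ p ∈ Set.Ioo (0 : ℝ) 1, ∀ α : ℝ,
        smoothRisk γ p (bayesScore2 γ p) ≤ smoothRisk γ p α) ∧
    StrictMonoOn (bayesScore2 γ) (Set.Ioo 0 1) := by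
  have hγ0 : (0:ℝ) < γ := by linarith
  constructor
  · rintro p ⟨hp0, hp1⟩ α
    unfold bayesScore2
    by_cases hA : γ / 2 ≤ p
    · rw [if_pos hA]
      set s := γ * (1 - p) / p with hs_def
      have hs : p * s = γ * (1 - p) := by
        rw [hs_def]; field_simp
      have hs0 : 0 < s := div_pos (mul_pos hγ0 (by linarith)) hp0
      have hsle : s ≤ 2 - γ := by nlinarith [hs]
      have hβ1 : 1 - γ ≤ 1 - s := by linarith
      have hβ2 : (1:ℝ) - s ≤ 1 := by linarith
      have hq : p * s / γ = 1 - p := by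
        rw [hs]; field_simp
      have t1 := hinge_tangent hγ0 hβ1 hβ2 α
      have t2 := hinge_lin_le hγ0 (-α)
      unfold smoothRisk
      rw [hinge_quad hβ1 hβ2, hinge_lin_eq hγ0 (by linarith : -(1 - s) ≤ 1 - γ)]
      have key : p * ((1 - s - 1) ^ 2 / (2 * γ) + (1 - s - 1) / γ * (α - (1 - s)))
          + (1 - p) * (1 - -α - γ / 2)
          = p * ((1 - s - 1) ^ 2 / (2 * γ)) + (1 - p) * (1 - -(1 - s) - γ / 2) := by
        linear_combination (-(α - 1 + s)) * hq
      calc p * ((1 - s - 1) ^ 2 / (2 * γ)) + (1 - p) * (1 - -(1 - s) - γ / 2)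
          = p * ((1 - s - 1) ^ 2 / (2 * γ) + (1 - s - 1) / γ * (α - (1 - s)))
            + (1 - p) * (1 - -α - γ / 2) := key.symm
        _ ≤ p * smoothHinge γ α + (1 - p) * smoothHinge γ (-α) :=
            add_le_add (mul_le_mul_of_nonneg_left t1 hp0.le)
              (mul_le_mul_of_nonneg_left t2 (by linarith))
    · rw [if_neg hA]
      by_cases hB : 1 - γ / 2 ≤ p
      · rw [if_pos hB]
        have hp2 : p < γ / 2 := not_le.1 hA
        have hβ1 : 1 - γ ≤ 2 * p - 1 := by linarith
        have hβ2 : 2 * p - 1 ≤ 1 := by linarith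
        have hβ1' : 1 - γ ≤ -(2 * p - 1) := by linarith
        have hβ2' : -(2 * p - 1) ≤ 1 := by linarith
        have t1 := hinge_tangent hγ0 hβ1 hβ2 α
        have t2 := hinge_tangent hγ0 hβ1' hβ2' (-α)
        unfold smoothRisk
        rw [hinge_quad hβ1 hβ2, hinge_quad hβ1' hβ2']
        have key : p * ((2 * p - 1 - 1) ^ 2 / (2 * γ) + (2 * p - 1 - 1) / γ * (α - (2 * p - 1)))
            + (1 - p) * ((-(2 * p - 1) - 1) ^ 2 / (2 * γ) + (-(2 * p - 1) - 1) / γ * (-α - -(2 * p - 1)))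
            = p * ((2 * p - 1 - 1) ^ 2 / (2 * γ)) + (1 - p) * ((-(2 * p - 1) - 1) ^ 2 / (2 * γ)) := by
          ring
        calc p * ((2 * p - 1 - 1) ^ 2 / (2 * γ)) + (1 - p) * ((-(2 * p - 1) - 1) ^ 2 / (2 * γ))
            = p * ((2 * p - 1 - 1) ^ 2 / (2 * γ) + (2 * p - 1 - 1) / γ * (α - (2 * p - 1)))
              + (1 - p) * ((-(2 * p - 1) - 1) ^ 2 / (2 * γ) + (-(2 * p - 1) - 1) / γ * (-α - -(2 * p - 1))) := key.symm
          _ ≤ p * smoothHinge γ α + (1 - p) * smoothHinge γ (-α) :=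
              add_le_add (mul_le_mul_of_nonneg_left t1 hp0.le)
                (mul_le_mul_of_nonneg_left t2 (by linarith))
      · rw [if_neg hB]
        have hpC : p < 1 - γ / 2 := not_le.1 hB
        set s := γ * p / (1 - p) with hs_def
        have h1p : (0:ℝ) < 1 - p := by linarith
        have hs : (1 - p) * s = γ * p := by
          rw [hs_def]; field_simp
        have hs0 : 0 < s := div_pos (mul_pos hγ0 hp0) h1p
        have hsle : s ≤ 2 - γ := by nlinarith [hs]
        have hβ1 : 1 - γ ≤ -(-1 + s) := by linarith
        have hβ2 : -(-1 + s) ≤ 1 := by linarith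
        have hq : (1 - p) * s / γ = p := by
          rw [hs]; field_simp
        have t1 := hinge_lin_le hγ0 α
        have t2 := hinge_tangent hγ0 hβ1 hβ2 (-α)
        unfold smoothRisk
        rw [hinge_quad hβ1 hβ2, hinge_lin_eq hγ0 (by linarith : (-1 + s : ℝ) ≤ 1 - γ)]
        have key : p * (1 - α - γ / 2)
            + (1 - p) * ((-(-1 + s) - 1) ^ 2 / (2 * γ) + (-(-1 + s) - 1) / γ * (-α - -(-1 + s)))
            = p * (1 - (-1 + s) - γ / 2) + (1 - p) * ((-(-1 + s) - 1) ^ 2 / (2 * γ)) := by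
          linear_combination (α + 1 - s) * hq
        calc p * (1 - (-1 + s) - γ / 2) + (1 - p) * ((-(-1 + s) - 1) ^ 2 / (2 * γ))
            = p * (1 - α - γ / 2)
              + (1 - p) * ((-(-1 + s) - 1) ^ 2 / (2 * γ) + (-(-1 + s) - 1) / γ * (-α - -(-1 + s))) := key.symm
          _ ≤ p * smoothHinge γ α + (1 - p) * smoothHinge γ (-α) :=
              add_le_add (mul_le_mul_of_nonneg_left t1 hp0.le)
                (mul_le_mul_of_nonneg_left t2 (by linarith))
  · rintro p ⟨hp0, hp1⟩ q ⟨hq0, hq1⟩ hpq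
    unfold bayesScore2
    by_cases hpA : γ / 2 ≤ p
    · have hqA : γ / 2 ≤ q := le_trans hpA hpq.le
      rw [if_pos hpA, if_pos hqA]
      have h : γ * (1 - q) / q < γ * (1 - p) / p := by
        rw [div_lt_div_iff₀ hq0 hp0]
        nlinarith [mul_pos hγ0 (sub_pos.2 hpq)]
      linarith
    · rw [if_neg hpA]
      have hp2 : p < γ / 2 := not_le.1 hpA
      by_cases hpB : 1 - γ / 2 ≤ p
      · rw [if_pos hpB]
        by_cases hqA : γ / 2 ≤ q
        · rw [if_pos hqA]
          have h : γ * (1 - q) / q ≤ 2 - γ := by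
            rw [div_le_iff₀ hq0]; nlinarith
          linarith
        · rw [if_neg hqA, if_pos (by linarith : 1 - γ / 2 ≤ q)]
          linarith
      · rw [if_neg hpB]
        have hpC : p < 1 - γ / 2 := not_le.1 hpB
        have h1p : (0:ℝ) < 1 - p := by linarith
        have h1 : γ * p / (1 - p) < 2 - γ := by
          rw [div_lt_iff₀ h1p]; nlinarith
        by_cases hqA : γ / 2 ≤ q
        · rw [if_pos hqA]
          have h2 : γ * (1 - q) / q ≤ 2 - γ := by
            rw [div_le_iff₀ hq0]; nlinarith
          linarith
        · rw [if_neg hqA]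
          by_cases hqB : 1 - γ / 2 ≤ q
          · rw [if_pos hqB]
            linarith
          · rw [if_neg hqB]
            have h1q : (0:ℝ) < 1 - q := by linarith
            have h : γ * p / (1 - p) < γ * q / (1 - q) := by
              rw [div_lt_div_iff₀ h1p h1q]
              nlinarith [mul_pos hγ0 (sub_pos.2 hpq)]
            linarith
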